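/- Let Γ be a nonnegative t×u matrix with greatest singular value s > 0, and let r, c be nonnegative unit singular vectors for s. Set X_{k,ℓ} = Γ_{k,ℓ} r_k c_ℓ / s, so that X has total weight 1. Then for every (k,ℓ) with X_{k,ℓ} ≠ 0, the quantity Γ_{k,ℓ}² · (Σ_j X_{k,j}) · (Σ_i X_{i,ℓ}) / X_{k,ℓ}² equals s². Consequently f(X) := ∏_{(k,ℓ): X_{k,ℓ}≠0} (Γ_{k,ℓ}² (Σ_j X_{k,j})(Σ_i X_{i,ℓ}) / X_{k,ℓ}²)^{X_{k,ℓ}} = s². -/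

import Mathlib

open Matrix
open scoped Classical

/-- Let `Γ` be nonnegative with greatest singular value `s > 0` and nonnegative
unit singular vectors `r, c`.  With `X k ℓ = Γ k ℓ * r k * c ℓ / s`, the matrix `X`
has total weight 1; for every `(k,ℓ)` with `X k ℓ ≠ 0` the quantity
`Γ k ℓ ² · (column sum) · (row sum) / X k ℓ ²` equals `s²`; and consequently
`f(X) = ∏_{X k ℓ ≠ 0} (Γ k ℓ ² (Σ_j X k j)(Σ_i X i ℓ) / X k ℓ ²)^{X k ℓ} = s²`. -/
theorem f_at_singular_point {t u : ℕ}
    (Γ : Matrix (Fin t) (Fin u) ℝ) (hΓ : ∀ k ℓ, 0 ≤ Γ k ℓ) (s : ℝ) (hs : 0 < s)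
    (hgr : IsGreatest {μ : ℝ | ∃ v : Fin u → ℝ, v ≠ 0 ∧ (Γᵀ * Γ).mulVec v = μ • v}
      (s ^ 2))
    (r : Fin t → ℝ) (c : Fin u → ℝ)
    (hrpos : ∀ i, 0 ≤ r i) (hcpos : ∀ j, 0 ≤ c j)
    (hr : ∑ i, r i ^ 2 = 1) (hc : ∑ j, c j ^ 2 = 1)
    (h1 : Γᵀ.mulVec r = s • c) (h2 : Γ.mulVec c = s • r)
    (X : Matrix (Fin t) (Fin u) ℝ) (hX : ∀ k ℓ, X k ℓ = Γ k ℓ * r k * c ℓ / s) :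
    (∑ k, ∑ ℓ, X k ℓ) = 1 ∧
    (∀ k ℓ, X k ℓ ≠ 0 →
      Γ k ℓ ^ 2 * (∑ j, X k j) * (∑ i, X i ℓ) / X k ℓ ^ 2 = s ^ 2) ∧
    (∏ p ∈ Finset.univ.filter (fun p : Fin t × Fin u => X p.1 p.2 ≠ 0),
        Real.rpow (Γ p.1 p.2 ^ 2 * (∑ j, X p.1 j) * (∑ i, X i p.2) / X p.1 p.2 ^ 2)
          (X p.1 p.2)) = s ^ 2 := by
  have hsne : s ≠ 0 := ne_of_gt hs
  -- row sums
  have hrow : ∀ k, (∑ j, X k j) = r k ^ 2 := by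
    intro k
    have h2k : ∑ j, Γ k j * c j = s * r k := by
      have := congrFun h2 k
      simpa [Matrix.mulVec, dotProduct] using this
    calc (∑ j, X k j) = (∑ j, Γ k j * c j) * r k / s := by
          rw [Finset.sum_mul, Finset.sum_div]
          apply Finset.sum_congr rfl
          intro j _
          rw [hX]; try ring
      _ = r k ^ 2 := by rw [h2k]; field_simp; try ring
  have hcol : ∀ ℓ, (∑ i, X i ℓ) = c ℓ ^ 2 := by
    intro ℓ
    have h1l : ∑ i, Γ i ℓ * r i = s * c ℓ := by
      have := congrFun h1 ℓ
      simpa [Matrix.mulVec, dotProduct, Matrix.transpose_apply] using this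
    calc (∑ i, X i ℓ) = (∑ i, Γ i ℓ * r i) * c ℓ / s := by
          rw [Finset.sum_mul, Finset.sum_div]
          apply Finset.sum_congr rfl
          intro i _
          rw [hX]; try ring
      _ = c ℓ ^ 2 := by rw [h1l]; field_simp; try ring
  have htot : (∑ k, ∑ ℓ, X k ℓ) = 1 := by
    calc (∑ k, ∑ ℓ, X k ℓ) = ∑ k, r k ^ 2 := by
          exact Finset.sum_congr rfl fun k _ => hrow k
      _ = 1 := hr
  have hpt : ∀ k ℓ, X k ℓ ≠ 0 →
      Γ k ℓ ^ 2 * (∑ j, X k j) * (∑ i, X i ℓ) / X k ℓ ^ 2 = s ^ 2 := by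
    intro k ℓ hne
    rw [hrow, hcol]
    have hXv : X k ℓ = Γ k ℓ * r k * c ℓ / s := hX k ℓ
    have hprod : Γ k ℓ * r k * c ℓ ≠ 0 := by
      intro h
      apply hne
      rw [hXv, h, zero_div]
    rw [hXv]
    have hΓ0 : Γ k ℓ ≠ 0 := fun h => hprod (by rw [h]; ring)
    have hr0 : r k ≠ 0 := fun h => hprod (by rw [h]; ring)
    have hc0 : c ℓ ≠ 0 := fun h => hprod (by rw [h]; ring)
    field_simp
  refine ⟨htot, hpt, ?_⟩
  have hprodeq : (∏ p ∈ Finset.univ.filter (fun p : Fin t × Fin u => X p.1 p.2 ≠ 0),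
      Real.rpow (Γ p.1 p.2 ^ 2 * (∑ j, X p.1 j) * (∑ i, X i p.2) / X p.1 p.2 ^ 2)
        (X p.1 p.2)) =
      ∏ p ∈ Finset.univ.filter (fun p : Fin t × Fin u => X p.1 p.2 ≠ 0),
      Real.rpow (s ^ 2) (X p.1 p.2) := by
    apply Finset.prod_congr rfl
    intro p hp
    rw [Finset.mem_filter] at hp
    rw [hpt p.1 p.2 hp.2]
  rw [hprodeq]
  have hs2 : (0:ℝ) < s ^ 2 := by positivity
  have hsum : (∑ p ∈ Finset.univ.filter (fun p : Fin t × Fin u => X p.1 p.2 ≠ 0),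
      X p.1 p.2) = 1 := by
    rw [Finset.sum_filter_ne_zero]
    rw [← htot, Fintype.sum_prod_type]
  calc (∏ p ∈ Finset.univ.filter (fun p : Fin t × Fin u => X p.1 p.2 ≠ 0),
      Real.rpow (s ^ 2) (X p.1 p.2))
      = (s ^ 2) ^ (∑ p ∈ Finset.univ.filter (fun p : Fin t × Fin u => X p.1 p.2 ≠ 0),
          X p.1 p.2) := (Real.rpow_sum_of_pos hs2 _ _).symm
    _ = (s ^ 2) ^ (1:ℝ) := by rw [hsum]
    _ = s ^ 2 := Real.rpow_one _
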